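/- Let J, a, b, τ be real numbers and H = J Z⊗Z + a Z⊗I + b I⊗Z. The frequency-doubling syncopated decoupling scheme (XX, XXXX) — X pulses on qubit 1 after every quarter-interval and X pulses on qubit 0 after the second and fourth quarter-intervals, i.e., combined pulses I⊗X, X⊗X, I⊗X, X⊗X in time order — refocuses this Hamiltonian exactly: (X⊗X)·exp(−iτH)·(I⊗X)·exp(−iτH)·(X⊗X)·exp(−iτH)·(I⊗X)·exp(−iτH) = I⊗I, the 4×4 identity matrix, for every real τ. -/

import Mathlib

open Matrix Kronecker NormedSpace

noncomputable section

/-- Pauli X matrix. -/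
def PX : Matrix (Fin 2) (Fin 2) ℂ := !![0, 1; 1, 0]
/-- Pauli Y matrix. -/
def PY : Matrix (Fin 2) (Fin 2) ℂ := !![0, -Complex.I; Complex.I, 0]
/-- Pauli Z matrix. -/
def PZ : Matrix (Fin 2) (Fin 2) ℂ := !![1, 0; 0, -1]
/-- 2×2 identity matrix. -/
def PI : Matrix (Fin 2) (Fin 2) ℂ := 1

/-- Two-qubit operators: 4×4 matrices indexed by `Fin 2 × Fin 2`. -/
abbrev Mat4 := Matrix (Fin 2 × Fin 2) (Fin 2 × Fin 2) ℂ

set_option maxHeartbeats 2000000 in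
/-- The frequency-doubling syncopated scheme (XX, XXXX), with combined pulses
I⊗X, X⊗X, I⊗X, X⊗X in time order, exactly refocuses `H = J Z⊗Z + a Z⊗I + b I⊗Z`. -/
theorem frequency_doubling_syncopation_exactly_refocuses_ZZ_and_dephasing
    (J a b τ : ℝ) (H : Mat4)
    (hH : H = (J : ℂ) • (PZ ⊗ₖ PZ) + (a : ℂ) • (PZ ⊗ₖ PI) + (b : ℂ) • (PI ⊗ₖ PZ)) :
    (PX ⊗ₖ PX) * exp ((-(Complex.I * (τ : ℂ))) • H) *
      (PI ⊗ₖ PX) * exp ((-(Complex.I * (τ : ℂ))) • H) *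
      (PX ⊗ₖ PX) * exp ((-(Complex.I * (τ : ℂ))) • H) *
      (PI ⊗ₖ PX) * exp ((-(Complex.I * (τ : ℂ))) • H) = PI ⊗ₖ PI := by
  set c : ℂ := -(Complex.I * (τ : ℂ)) with hc
  set z : Fin 2 → ℂ := fun i => if i = 0 then 1 else -1 with hz
  set d : Fin 2 × Fin 2 → ℂ :=
    fun p => c * (z p.1 * z p.2 * J + z p.1 * a + z p.2 * b) with hdd
  have hd : c • H = Matrix.diagonal d := by
    subst hH
    ext ⟨i, j⟩ ⟨k, l⟩
    fin_cases i <;> fin_cases j <;> fin_cases k <;> fin_cases l <;>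
      simp [PZ, PI, Matrix.diagonal, d, z, Matrix.kroneckerMap_apply, Matrix.one_apply, Prod.ext_iff] <;>
      ring
  rw [hd, Matrix.exp_diagonal]
  ext ⟨i, j⟩ ⟨k, l⟩
  fin_cases i <;> fin_cases j <;> fin_cases k <;> fin_cases l <;>
    simp [PX, PI, Matrix.mul_apply, Fintype.sum_prod_type, Fin.sum_univ_two,
      Matrix.kroneckerMap_apply, Matrix.one_apply, Matrix.diagonal, d, z,
      ← Complex.exp_add]
  all_goals rw [← exp_add, ← exp_add, ← exp_add]
  all_goals
    convert (exp_zero : exp (0:ℂ) = 1) using 2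
    · rfl
    ring
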